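/- Let R be a reduced commutative ring of characteristic p and A = R⟦X⟧[X^{-1}]. If u ∈ A satisfies u^p = u, then u lies in the subring R (constant Laurent series) and satisfies u^p = u in R. -/

import Mathlib

open HahnSeries

lemma aux_mul_coeff {R : Type*} [CommRing R] (x y : HahnSeries ℤ R) (a b : ℤ)
    (hx : ∀ i < a, x.coeff i = 0) (hy : ∀ j < b, y.coeff j = 0) :
    (∀ i < a + b, (x * y).coeff i = 0) ∧ (x * y).coeff (a + b) = x.coeff a * y.coeff b := by
  constructor
  · intro g hg
    rw [HahnSeries.coeff_mul]
    apply Finset.sum_eq_zero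
    rintro ⟨i, j⟩ hij
    rw [Finset.mem_addAntidiagonal] at hij
    obtain ⟨hi, hj, hsum⟩ := hij
    exfalso
    have hia : a ≤ i := le_of_not_gt fun hlt => hi (hx i hlt)
    have hjb : b ≤ j := le_of_not_gt fun hlt => hj (hy j hlt)
    omega
  · rw [HahnSeries.coeff_mul]
    apply Finset.sum_eq_single (a, b)
    · rintro ⟨i, j⟩ hij hne
      rw [Finset.mem_addAntidiagonal] at hij
      obtain ⟨hi, hj, hsum⟩ := hij
      have hia : a ≤ i := le_of_not_gt fun hlt => hi (hx i hlt)
      have hjb : b ≤ j := le_of_not_gt fun hlt => hj (hy j hlt)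
      exfalso
      apply hne
      have : i = a := by omega
      have : j = b := by omega
      simp_all
    · intro hnm
      rw [Finset.mem_addAntidiagonal] at hnm
      push_neg at hnm
      by_cases ha : x.coeff a = 0
      · simp [ha]
      · by_cases hb : y.coeff b = 0
        · simp [hb]
        · exact absurd rfl (hnm ha hb)

lemma aux_pow_coeff {R : Type*} [CommRing R] (x : HahnSeries ℤ R) (n : ℤ)
    (hx : ∀ i < n, x.coeff i = 0) (k : ℕ) :
    (∀ i < (k : ℤ) * n, (x ^ k).coeff i = 0) ∧
      (x ^ k).coeff ((k : ℤ) * n) = (x.coeff n) ^ k := by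
  induction k with
  | zero =>
    constructor
    · intro i hi
      simp only [pow_zero]
      rw [show (1 : HahnSeries ℤ R) = HahnSeries.single 0 1 from rfl]
      exact HahnSeries.coeff_single_of_ne (by simpa using hi.ne)
    · simp
  | succ k ih =>
    have h1 := aux_mul_coeff (x ^ k) x ((k : ℤ) * n) n ih.1 hx
    have hcast : ((k : ℤ) + 1) * n = (k : ℤ) * n + n := by ring
    constructor
    · intro i hi
      rw [pow_succ]
      refine h1.1 i ?_
      push_cast at hi
      linarith
    · rw [pow_succ, show ((k + 1 : ℕ) : ℤ) * n = (k : ℤ) * n + n by push_cast; ring,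
        h1.2, ih.2, pow_succ]

/-- If a nonzero Hahn series over a reduced ring satisfies `w ^ p = w`, then
for any `n` with all coefficients below `n` zero and `w.coeff n ≠ 0`, we get `n = 0`. -/
lemma aux_order_zero {p : ℕ} [Fact p.Prime] {R : Type*} [CommRing R] [IsReduced R]
    (w : HahnSeries ℤ R) (h : w ^ p = w) {n : ℤ}
    (hbelow : ∀ i < n, w.coeff i = 0) (hn : w.coeff n ≠ 0) : n = 0 := by
  have hp : 2 ≤ p := (Fact.out : p.Prime).two_le
  obtain ⟨hz, hc⟩ := aux_pow_coeff w n hbelow p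
  have hpn : w.coeff ((p : ℤ) * n) = (w.coeff n) ^ p := by rw [h] at hc; exact hc
  have hne : (w.coeff n) ^ p ≠ 0 := fun h0 =>
    hn (IsNilpotent.eq_zero ⟨p, h0⟩)
  -- p * n ≥ n : otherwise coeff (p*n) would be 0 by hbelow
  have h1 : ¬ ((p : ℤ) * n < n) := by
    intro hlt
    have h0 := hbelow _ hlt
    rw [hpn] at h0
    exact hne h0
  -- n ≥ p * n : otherwise coeff n of w ^ p is zero
  have h2 : ¬ (n < (p : ℤ) * n) := by
    intro hlt
    apply hn
    rw [← h]
    exact hz n hlt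
  have : (p : ℤ) * n = n := le_antisymm (le_of_not_gt h2) (le_of_not_gt h1)
  have hp2 : (2 : ℤ) ≤ (p : ℤ) := by exact_mod_cast hp
  nlinarith [sq_nonneg n]

/-- Over a reduced commutative ring `R` of characteristic `p`, a Laurent series `u`
with `u ^ p = u` is a constant, i.e. lies in the image of `R`, and the constant
satisfies `c ^ p = c`. -/
theorem laurentSeries_frobenius_fixed_is_constant (p : ℕ) [Fact p.Prime]
    (R : Type*) [CommRing R] [IsReduced R] [CharP R p]
    (u : LaurentSeries R) (h : u ^ p = u) :
    ∃ c : R, c ^ p = c ∧ u = HahnSeries.C c := by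
  have hchar : CharP (LaurentSeries R) p :=
    charP_of_injective_ringHom (HahnSeries.C_injective.comp fun _ _ => id :
      Function.Injective (HahnSeries.C : R →+* LaurentSeries R)) p
  by_cases hu : u = 0
  · exact ⟨0, by simp [(Fact.out : p.Prime).pos.ne'], by simp [hu]⟩
  -- order of u is 0
  have horder : u.order = 0 :=
    aux_order_zero u h (fun i hi => HahnSeries.coeff_eq_zero_of_lt_order hi)
      (HahnSeries.coeff_order_eq_zero.not.mpr hu)
  have hbelow : ∀ i < (0 : ℤ), u.coeff i = 0 := fun i hi =>
    HahnSeries.coeff_eq_zero_of_lt_order (horder ▸ hi)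
  set c : R := u.coeff 0 with hc
  -- c ^ p = c
  have hcp : c ^ p = c := by
    obtain ⟨_, hcoeff⟩ := aux_pow_coeff u 0 hbelow p
    rw [mul_zero] at hcoeff
    rw [← hcoeff, h]
  refine ⟨c, hcp, ?_⟩
  -- show v = u - C c is zero
  by_contra hne
  set v : LaurentSeries R := u - HahnSeries.C c with hv
  have hvne : v ≠ 0 := fun h0 => hne (by rwa [hv, sub_eq_zero] at h0)
  haveI := hchar
  have hvp : v ^ p = v := by
    rw [hv, sub_pow_char u (HahnSeries.C c), h, ← map_pow, hcp]
  have hvbelow : ∀ i < (0 : ℤ), v.coeff i = 0 := by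
    intro i hi
    rw [hv, HahnSeries.coeff_sub, hbelow i hi, HahnSeries.C_apply,
      HahnSeries.coeff_single_of_ne hi.ne, sub_zero]
  have hv0 : v.coeff 0 = 0 := by
    rw [hv, HahnSeries.coeff_sub, HahnSeries.C_apply, HahnSeries.coeff_single_same, hc, sub_self]
  -- order of v
  have hvorder : v.order = 0 :=
    aux_order_zero v hvp
      (fun i hi => HahnSeries.coeff_eq_zero_of_lt_order hi)
      (HahnSeries.coeff_order_eq_zero.not.mpr hvne)
  exact HahnSeries.coeff_order_eq_zero.not.mpr hvne (hvorder ▸ hv0)
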